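/- arXiv:1706.00971 — 5 statements merged into one kernel-verified Lean document; each statement's English description precedes it below -/
import Mathlib

section
/- For 0 < α < 1, the sequence b_j = (j+1)^{1-α} - j^{1-α} is strictly log-convex: b_j^2 < b_{j-1} · b_{j+1} for all j ≥ 1. -/
open MeasureTheory intervalIntegral Set

lemma key_int (α a : ℝ) (h : -1 < -α) :
    (∫ t in a..(a+1), t ^ (-α)) = ((a+1) ^ (1-α) - a ^ (1-α)) / (1-α) := by
  rw [integral_rpow (Or.inl h)]
  norm_num [neg_add_eq_sub]

lemma meas_sub_rpow (α : ℝ) : Measurable fun t : ℝ => (t - 1) ^ α := by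
  measurability

lemma meas_add_rpow (α : ℝ) : Measurable fun t : ℝ => (t + 1) ^ α := by
  measurability

set_option maxHeartbeats 1000000

/-- For `0 < α < 1`, the sequence `b j = (j+1)^(1-α) - j^(1-α)` is strictly
log-convex: `(b j)^2 < b (j-1) * b (j+1)` for all `j ≥ 1`. -/
theorem stmt_4 (α : ℝ) (hα0 : 0 < α) (hα1 : α < 1)
    (b : ℕ → ℝ) (hb : ∀ j : ℕ, b j = ((j : ℝ) + 1) ^ (1 - α) - (j : ℝ) ^ (1 - α))
    (j : ℕ) (hj : 1 ≤ j) :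
    (b j) ^ 2 < b (j - 1) * b (j + 1) := by
  have h1α : (0:ℝ) < 1 - α := by linarith
  have hneg : (-1:ℝ) < -α := by linarith
  set J : ℝ := (j : ℝ) with hJ
  have hJ1 : (1:ℝ) ≤ J := by show (1:ℝ) ≤ (j:ℝ); exact_mod_cast hj
  -- the three interval integrals
  set A : ℝ := ∫ t in J..(J+1), t ^ (-α) with hA
  set C : ℝ := ∫ t in J..(J+1), (t-1) ^ (-α) with hC
  set D : ℝ := ∫ t in J..(J+1), (t+1) ^ (-α) with hD
  have hbj : b j = (1-α) * A := by
    rw [hb, hA, key_int α J hneg, mul_div_cancel₀ _ h1α.ne']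
  have hbjm : b (j-1) = (1-α) * C := by
    have hc : ((j-1 : ℕ) : ℝ) = J - 1 := by
      rw [Nat.cast_sub hj]; norm_num; exact hJ.symm
    have : C = ∫ t in (J-1)..(J-1+1), t ^ (-α) := by
      rw [hC, integral_comp_sub_right (fun t => t ^ (-α)) 1]
      norm_num
    rw [hb, hc, this, key_int α (J-1) hneg, mul_div_cancel₀ _ h1α.ne']
  have hbjp : b (j+1) = (1-α) * D := by
    have : D = ∫ t in (J+1)..(J+1+1), t ^ (-α) := by
      rw [hD, integral_comp_add_right (fun t => t ^ (-α)) 1]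
    rw [hb, this, key_int α (J+1) hneg, mul_div_cancel₀ _ h1α.ne']
    push_cast; ring_nf; rfl
  -- integrabilities
  have hIA : IntervalIntegrable (fun t : ℝ => t ^ (-α)) volume J (J+1) :=
    intervalIntegrable_rpow' hneg
  have hIC : IntervalIntegrable (fun t : ℝ => (t-1) ^ (-α)) volume J (J+1) := by
    have := (intervalIntegrable_rpow' (a := J - 1) (b := J) hneg).comp_sub_right 1
    simpa using this
  have hID : IntervalIntegrable (fun t : ℝ => (t+1) ^ (-α)) volume J (J+1) := by
    have := (intervalIntegrable_rpow' (a := J + 1) (b := J + 2) hneg).comp_add_right 1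
    have h2 : J + 2 - 1 = J + 1 := by ring
    simpa [h2] using this
  have hIu : IntervalIntegrable (fun t : ℝ => (t-1) ^ (-α/2)) volume J (J+1) := by
    have := (intervalIntegrable_rpow' (a := J - 1) (b := J) (r := -α/2) (by linarith)).comp_sub_right 1
    simpa using this
  have hvcont : ContinuousOn (fun t : ℝ => (t+1) ^ (-α/2)) (uIcc J (J+1)) := by
    apply ContinuousOn.rpow_const (by fun_prop)
    intro t ht
    left
    rw [uIcc_of_le (by linarith)] at ht
    have := ht.1
    linarith
  have hIuv : IntervalIntegrable
      (fun t : ℝ => (t-1) ^ (-α/2) * (t+1) ^ (-α/2)) volume J (J+1) :=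
    hIu.mul_continuousOn hvcont
  set B : ℝ := ∫ t in J..(J+1), (t-1) ^ (-α/2) * (t+1) ^ (-α/2) with hB
  -- pointwise strict inequality on the interior
  have hpt : ∀ t ∈ Ioo J (J+1), t ^ (-α) < (t-1) ^ (-α/2) * (t+1) ^ (-α/2) := by
    intro t ht
    have ht1 : 1 < t := lt_of_le_of_lt hJ1 ht.1
    have h1 : (0:ℝ) < t - 1 := by linarith
    have h2 : (0:ℝ) < t + 1 := by linarith
    have hmul : (t-1) ^ (-α/2) * (t+1) ^ (-α/2) = ((t-1)*(t+1)) ^ (-α/2) :=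
      (Real.mul_rpow h1.le h2.le).symm
    have hlt : (t*t) ^ (-α/2) < ((t-1)*(t+1)) ^ (-α/2) := by
      apply Real.rpow_lt_rpow_of_neg (by nlinarith) (by nlinarith) (by linarith)
    have htt : (t*t) ^ (-α/2) = t ^ (-α) := by
      rw [show t*t = t ^ ((2:ℕ):ℝ) by rw [Real.rpow_natCast]; ring,
          ← Real.rpow_mul (by linarith : (0:ℝ) ≤ t)]
      congr 1; push_cast; ring
    rw [hmul, ← htt]
    exact hlt
  have hAB : A < B := by
    have hpos : 0 < ∫ t in J..(J+1),
        ((t-1) ^ (-α/2) * (t+1) ^ (-α/2) - t ^ (-α)) := by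
      apply intervalIntegral_pos_of_pos_on (hIuv.sub hIA)
      · intro t ht; exact sub_pos.mpr (hpt t ht)
      · linarith
    have := intervalIntegral.integral_sub hIuv hIA
    rw [this] at hpos
    linarith
  -- Cauchy–Schwarz (Hölder with p = q = 2)
  have hle : J ≤ J + 1 := by linarith
  set μ := volume.restrict (Ioc J (J+1)) with hμ
  have hsub : ∀ t ∈ Ioc J (J+1), (1:ℝ) ≤ t := fun t ht => le_trans hJ1 ht.1.le
  have hBCD : B ≤ C ^ ((1:ℝ)/2) * D ^ ((1:ℝ)/2) := by
    have hpq : Real.HolderConjugate 2 2 := Real.HolderConjugate.two_two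
    have humeas : AEStronglyMeasurable (fun t : ℝ => (t-1) ^ (-α/2)) μ := by
      exact (meas_sub_rpow _).aestronglyMeasurable
    have hvmeas : AEStronglyMeasurable (fun t : ℝ => (t+1) ^ (-α/2)) μ :=
      (meas_add_rpow _).aestronglyMeasurable
    have hu0 : 0 ≤ᵐ[μ] (fun t : ℝ => (t-1) ^ (-α/2)) := by
      rw [Filter.EventuallyLE, ae_restrict_iff' measurableSet_Ioc]
      filter_upwards with t ht
      exact Real.rpow_nonneg (by linarith [hsub t ht]) _
    have hv0 : 0 ≤ᵐ[μ] (fun t : ℝ => (t+1) ^ (-α/2)) := by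
      rw [Filter.EventuallyLE, ae_restrict_iff' measurableSet_Ioc]
      filter_upwards with t ht
      exact Real.rpow_nonneg (by linarith [hsub t ht]) _
    have huI : Integrable (fun t : ℝ => ((t-1) ^ (-α/2))^2) μ := by
      apply hIC.1.congr
      rw [Filter.EventuallyEq, ae_restrict_iff' measurableSet_Ioc]
      filter_upwards with t ht
      rw [← Real.rpow_natCast ((t-1) ^ (-α/2)) 2,
        ← Real.rpow_mul (by linarith [hsub t ht] : (0:ℝ) ≤ t - 1)]
      congr 1; push_cast; ring
    have hvI : Integrable (fun t : ℝ => ((t+1) ^ (-α/2))^2) μ := by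
      apply hID.1.congr
      rw [Filter.EventuallyEq, ae_restrict_iff' measurableSet_Ioc]
      filter_upwards with t ht
      rw [← Real.rpow_natCast ((t+1) ^ (-α/2)) 2,
        ← Real.rpow_mul (by linarith [hsub t ht] : (0:ℝ) ≤ t + 1)]
      congr 1; push_cast; ring
    have h2 : ENNReal.ofReal (2:ℝ) = 2 := by norm_num
    have hu2 : MemLp (fun t : ℝ => (t-1) ^ (-α/2)) (ENNReal.ofReal (2:ℝ)) μ := by
      rw [h2]; exact (memLp_two_iff_integrable_sq humeas).mpr huI
    have hv2 : MemLp (fun t : ℝ => (t+1) ^ (-α/2)) (ENNReal.ofReal (2:ℝ)) μ := by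
      rw [h2]; exact (memLp_two_iff_integrable_sq hvmeas).mpr hvI
    have H := MeasureTheory.integral_mul_le_Lp_mul_Lq_of_nonneg hpq hu0 hv0 hu2 hv2
    have e1 : B = ∫ t, (t-1) ^ (-α/2) * (t+1) ^ (-α/2) ∂μ := by
      rw [hB, intervalIntegral.integral_of_le hle]
    have e2 : (∫ t, (((t-1:ℝ)) ^ (-α/2)) ^ (2:ℕ) ∂μ) = C := by
      rw [hC, intervalIntegral.integral_of_le hle]
      apply MeasureTheory.integral_congr_ae
      rw [Filter.EventuallyEq, ae_restrict_iff' measurableSet_Ioc]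
      filter_upwards with t ht
      rw [← Real.rpow_natCast ((t-1) ^ (-α/2)) 2,
        ← Real.rpow_mul (by linarith [hsub t ht] : (0:ℝ) ≤ t - 1)]
      congr 1; push_cast; ring
    have e3 : (∫ t, (((t+1:ℝ)) ^ (-α/2)) ^ (2:ℕ) ∂μ) = D := by
      rw [hD, intervalIntegral.integral_of_le hle]
      apply MeasureTheory.integral_congr_ae
      rw [Filter.EventuallyEq, ae_restrict_iff' measurableSet_Ioc]
      filter_upwards with t ht
      rw [← Real.rpow_natCast ((t+1) ^ (-α/2)) 2,
        ← Real.rpow_mul (by linarith [hsub t ht] : (0:ℝ) ≤ t + 1)]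
      congr 1; push_cast; ring
    rw [e1]
    calc (∫ t, (t-1) ^ (-α/2) * (t+1) ^ (-α/2) ∂μ)
        ≤ (∫ t, (((t-1:ℝ)) ^ (-α/2)) ^ (2:ℕ) ∂μ) ^ ((1:ℝ)/2)
          * (∫ t, (((t+1:ℝ)) ^ (-α/2)) ^ (2:ℕ) ∂μ) ^ ((1:ℝ)/2) := by
          simpa using H
      _ = C ^ ((1:ℝ)/2) * D ^ ((1:ℝ)/2) := by rw [e2, e3]
  -- nonnegativity of the integrals
  have hA0 : 0 ≤ A := by
    rw [hA]
    apply intervalIntegral.integral_nonneg hle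
    intro t ht
    exact Real.rpow_nonneg (by linarith [ht.1]) _
  have hC0 : 0 ≤ C := by
    rw [hC]
    apply intervalIntegral.integral_nonneg hle
    intro t ht
    exact Real.rpow_nonneg (by linarith [ht.1]) _
  have hD0 : 0 ≤ D := by
    rw [hD]
    apply intervalIntegral.integral_nonneg hle
    intro t ht
    exact Real.rpow_nonneg (by linarith [ht.1]) _
  have hsq : (C ^ ((1:ℝ)/2) * D ^ ((1:ℝ)/2))^2 = C * D := by
    rw [mul_pow, ← Real.rpow_natCast (C ^ ((1:ℝ)/2)) 2,
      ← Real.rpow_natCast (D ^ ((1:ℝ)/2)) 2,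
      ← Real.rpow_mul hC0, ← Real.rpow_mul hD0]
    norm_num
  have hfin : A^2 < C * D := by
    have h1 : A^2 < B^2 := by
      apply pow_lt_pow_left₀ hAB hA0
      norm_num
    have h2 : B^2 ≤ (C^((1:ℝ)/2) * D^((1:ℝ)/2))^2 :=
      pow_le_pow_left₀ (le_trans hA0 hAB.le) hBCD 2
    rw [hsq] at h2
    linarith
  have hpos2 : (0:ℝ) < (1-α)^2 := by positivity
  calc (b j)^2 = (1-α)^2 * A^2 := by rw [hbj]; ring
    _ < (1-α)^2 * (C*D) := by exact mul_lt_mul_of_pos_left hfin hpos2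
    _ = ((1-α)*C)*((1-α)*D) := by ring
    _ = b (j-1) * b (j+1) := by rw [hbjm, hbjp]
end

section
/- Let (b_j)_{j≥0} be a positive sequence with b_0 = 1, and define e_0 = 1 and e_j = -∑_{i=0}^{j-1} b_{j-i} e_i for j ≥ 1 (the reciprocal power series coefficients). If b is strictly log-convex (b_j^2 < b_{j-1} b_{j+1} for j ≥ 1) and strictly decreasing with b_1 < b_0, then e_n < 0 for all n ≥ 1. -/
open Finset

/-- Reciprocal power series coefficients of a positive, strictly decreasing,
strictly log-convex sequence with `b 0 = 1` are negative: `e n < 0` for `n ≥ 1`. -/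
theorem stmt_5 (b e : ℕ → ℝ)
    (hb0 : b 0 = 1)
    (hbpos : ∀ j, 0 < b j)
    (hbdec : ∀ j, b (j + 1) < b j)
    (hblc : ∀ j : ℕ, 1 ≤ j → (b j) ^ 2 < b (j - 1) * b (j + 1))
    (he0 : e 0 = 1)
    (herec : ∀ j : ℕ, 1 ≤ j → e j = -∑ i ∈ Finset.range j, b (j - i) * e i)
    (n : ℕ) (hn : 1 ≤ n) :
    e n < 0 := by
  -- ratio monotonicity
  have hr : StrictMono (fun k => b (k + 1) / b k) := by
    apply strictMono_nat_of_lt_succ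
    intro k
    rw [div_lt_div_iff₀ (hbpos k) (hbpos (k + 1))]
    have h := hblc (k + 1) (by omega)
    simp only [Nat.add_sub_cancel] at h
    nlinarith [h]
  have hcross : ∀ k m : ℕ, k < m → b (k + 1) * b m < b k * b (m + 1) := by
    intro k m hkm
    have h := hr hkm
    simp only at h
    rw [div_lt_div_iff₀ (hbpos k) (hbpos m)] at h
    linarith
  revert hn
  induction n using Nat.strong_induction_on with
  | _ n IH =>
    intro hn
    rcases Nat.lt_or_ge n 2 with h2 | h2
    · -- n = 1
      have hn1 : n = 1 := by omega
      subst hn1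
      rw [herec 1 le_rfl]
      simp [he0]
      exact hbpos 1
    · obtain ⟨m, rfl⟩ : ∃ m, n = m + 2 := ⟨n - 2, by omega⟩
      have h1 : ∑ i ∈ Finset.range (m + 2), b (m + 2 - i) * e i = -e (m + 2) := by
        have := herec (m + 2) (by omega); linarith
      have h2' : ∑ i ∈ Finset.range (m + 2), b (m + 1 - i) * e i = 0 := by
        rw [Finset.sum_range_succ]
        have := herec (m + 1) (by omega)
        simp only [Nat.sub_self, hb0]
        have hcongr : ∑ i ∈ Finset.range (m + 1), b (m + 1 - i) * e i = -e (m + 1) := by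
          linarith
        rw [hcongr]; ring
      have key : b (m + 1) * e (m + 2) =
          ∑ i ∈ Finset.range (m + 2),
            (b (m + 2) * b (m + 1 - i) - b (m + 1) * b (m + 2 - i)) * e i := by
        have : ∑ i ∈ Finset.range (m + 2),
            (b (m + 2) * b (m + 1 - i) - b (m + 1) * b (m + 2 - i)) * e i =
            b (m + 2) * ∑ i ∈ Finset.range (m + 2), b (m + 1 - i) * e i
            - b (m + 1) * ∑ i ∈ Finset.range (m + 2), b (m + 2 - i) * e i := by
          rw [Finset.mul_sum, Finset.mul_sum, ← Finset.sum_sub_distrib]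
          exact Finset.sum_congr rfl (fun i _ => by ring)
        rw [this, h1, h2']; ring
      have hsum : ∑ i ∈ Finset.range (m + 2),
          (b (m + 2) * b (m + 1 - i) - b (m + 1) * b (m + 2 - i)) * e i < 0 := by
        have := Finset.sum_lt_sum (s := Finset.range (m + 2))
          (f := fun i => (b (m + 2) * b (m + 1 - i) - b (m + 1) * b (m + 2 - i)) * e i)
          (g := fun _ => (0 : ℝ))
          (by
            intro i hi
            rcases Nat.eq_zero_or_pos i with hi0 | hi0
            · subst hi0; simp; ring_nf; nlinarith [hbpos (m+1), hbpos (m+2)]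
            · have hilt : i < m + 2 := Finset.mem_range.mp hi
              have hei : e i < 0 := IH i hilt hi0
              obtain ⟨k, hk1, hk2, hk3⟩ : ∃ k, m + 1 - i = k ∧ m + 2 - i = k + 1 ∧ k < m + 1 :=
                ⟨m + 1 - i, rfl, by omega, by omega⟩
              rw [hk1, hk2]
              have := hcross k (m + 1) hk3
              nlinarith)
          (by
            refine ⟨1, Finset.mem_range.mpr (by omega), ?_⟩
            have he1 : e 1 < 0 := IH 1 (by omega) le_rfl
            have := hcross m (m + 1) (by omega)
            have h1' : m + 1 - 1 = m := by omega
            have h2'' : m + 2 - 1 = m + 1 := by omega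
            rw [h1', h2'']
            nlinarith)
        simpa using this
      have hb := hbpos (m + 1)
      nlinarith [key, hsum]
end

section
/- Let b : ℕ → ℝ satisfy b_0 = 1, b_j > 0, b_j strictly decreasing, strictly log-convex (b_j^2 < b_{j-1}b_{j+1}), and ∑ b_j = ∞. Define e by e_0 = 1, e_j = -∑_{i=0}^{j-1} b_{j-i} e_i. Then the partial sums satisfy ∑_{j=0}^{n} e_j > 0 for every n ≥ 0. -/
open Finset Filter

/-- If `b` is positive, strictly decreasing, strictly log-convex with `b 0 = 1`
and `∑ b j = ∞`, then the partial sums of the reciprocal power series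
coefficients `e` are strictly positive: `∑_{j=0}^{n} e j > 0` for all `n`. -/
theorem stmt_6 (b e : ℕ → ℝ)
    (hb0 : b 0 = 1)
    (hbpos : ∀ j, 0 < b j)
    (hbdec : ∀ j, b (j + 1) < b j)
    (hblc : ∀ j : ℕ, 1 ≤ j → (b j) ^ 2 < b (j - 1) * b (j + 1))
    (hbdiv : Tendsto (fun n : ℕ => ∑ j ∈ Finset.range n, b j) atTop atTop)
    (he0 : e 0 = 1)
    (herec : ∀ j : ℕ, 1 ≤ j → e j = -∑ i ∈ Finset.range j, b (j - i) * e i)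
    (n : ℕ) :
    0 < ∑ j ∈ Finset.range (n + 1), e j := by
  -- antitonicity of b
  have hanti : ∀ p q : ℕ, p ≤ q → b q ≤ b p := by
    intro p q hpq
    induction hpq with
    | refl => exact le_rfl
    | step h ih => exact le_trans (hbdec _).le ih
  -- ratio monotonicity from log-convexity
  have hratio : ∀ k l : ℕ, k < l → b (k + 1) * b l < b k * b (l + 1) := by
    intro k l hkl
    induction l with
    | zero => omega
    | succ l ih =>
      rcases Nat.lt_succ_iff_lt_or_eq.mp hkl with h | h
      · have h1 := ih h
        have h2 := hblc (l + 1) (by omega)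
        simp only [Nat.add_sub_cancel] at h2
        have hl := hbpos l
        have hl1 := hbpos (l + 1)
        nlinarith [hbpos k, hbpos (k + 1), hbpos (l + 2)]
      · subst h
        have h2 := hblc (k + 1) (by omega)
        simp only [Nat.add_sub_cancel] at h2
        nlinarith
  -- convolution identity
  have hconv : ∀ m : ℕ, 1 ≤ m → ∑ i ∈ range (m + 1), b (m - i) * e i = 0 := by
    intro m hm
    have hms : m - m = 0 := Nat.sub_self m
    rw [Finset.sum_range_succ, hms, hb0, herec m hm]
    ring
  -- Kaluza: e j < 0 for j ≥ 1
  have heneg : ∀ j : ℕ, 1 ≤ j → e j < 0 := by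
    intro j
    induction j using Nat.strong_induction_on with
    | _ j ih =>
      intro hj
      match j, hj with
      | 1, _ =>
        rw [herec 1 le_rfl]
        simpa [he0] using hbpos 1
      | (m + 2), _ =>
        have hm1 : 1 ≤ m + 1 := by omega
        rw [herec (m + 2) (by omega)]
        rw [neg_lt, neg_zero]
        set c : ℝ := b (m + 2) / b (m + 1) with hc
        have hbm1 : (0:ℝ) < b (m + 1) := hbpos (m + 1)
        have hz : c * ∑ i ∈ range (m + 2), b (m + 1 - i) * e i = 0 := by
          rw [hconv (m + 1) hm1]; ring
        have key : ∑ i ∈ range (m + 2), (b (m + 2 - i) - c * b (m + 1 - i)) * e i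
            = ∑ i ∈ range (m + 2), b (m + 2 - i) * e i := by
          have h' : ∑ i ∈ range (m + 2), (b (m + 2 - i) - c * b (m + 1 - i)) * e i
              = ∑ i ∈ range (m + 2), b (m + 2 - i) * e i
                - c * ∑ i ∈ range (m + 2), b (m + 1 - i) * e i := by
            rw [Finset.mul_sum, ← Finset.sum_sub_distrib]
            exact Finset.sum_congr rfl fun i _ => by ring
          rw [h', hconv (m + 1) hm1, mul_zero, sub_zero]
        rw [← key]
        apply Finset.sum_pos'
        · intro i hi
          simp only [Finset.mem_range] at hi
          rcases Nat.eq_zero_or_pos i with h0 | h1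
          · subst h0
            have : b (m + 2 - 0) - c * b (m + 1 - 0) = 0 := by
              simp only [Nat.sub_zero, hc]
              field_simp
              ring
            rw [this]; simp
          · -- i ≥ 1, i ≤ m + 1
            have hi' : i ≤ m + 1 := by omega
            have hei : e i < 0 := ih i (by omega) h1
            have hrat : b (m + 1 - i + 1) * b (m + 1) < b (m + 1 - i) * b (m + 2) := by
              have := hratio (m + 1 - i) (m + 1) (by omega)
              simpa using this
            have heq : m + 2 - i = m + 1 - i + 1 := by omega
            have hcoef : b (m + 2 - i) - c * b (m + 1 - i) < 0 := by
              rw [heq, hc, sub_neg]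
              rw [div_mul_eq_mul_div, lt_div_iff₀ hbm1]
              nlinarith
            exact le_of_lt (mul_pos_of_neg_of_neg hcoef hei)
        · refine ⟨m + 1, Finset.mem_range.mpr (by omega), ?_⟩
          have hei : e (m + 1) < 0 := ih (m + 1) (by omega) hm1
          have hrat : b (0 + 1) * b (m + 1) < b 0 * b (m + 2) := by
            have := hratio 0 (m + 1) (by omega)
            simpa using this
          have hcoef : b (m + 2 - (m + 1)) - c * b (m + 1 - (m + 1)) < 0 := by
            have h1 : m + 2 - (m + 1) = 1 := by omega
            have h2 : m + 1 - (m + 1) = 0 := by omega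
            rw [h1, h2, hc, sub_neg, div_mul_eq_mul_div, lt_div_iff₀ hbm1]
            nlinarith
          exact mul_pos_of_neg_of_neg hcoef hei
  -- main argument
  by_contra hS
  push_neg at hS
  rcases Nat.eq_zero_or_pos n with h0 | hn1
  · subst h0; simp [he0] at hS; linarith
  -- rewrite partial sum peeling the bottom term
  rw [Finset.sum_range_succ'] at hS
  rw [he0] at hS
  -- T := ∑ i ∈ range n, -e (i+1) ≥ 1
  have hT : (1:ℝ) ≤ ∑ i ∈ range n, -e (i + 1) := by
    rw [Finset.sum_neg_distrib]
    linarith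
  -- convolution at m = n + 1
  have hc := hconv (n + 1) (by omega)
  rw [Finset.sum_range_succ'] at hc
  simp only [Nat.add_sub_cancel, Nat.sub_zero, he0, mul_one] at hc
  -- hc : ∑ i ∈ range (n+1), b (n + 1 - (i+1)) * e (i+1) + b (n+1) = 0
  rw [Finset.sum_range_succ] at hc
  have hsimp : ∀ i : ℕ, n + 1 - (i + 1) = n - i := fun i => by omega
  simp only [hsimp, Nat.sub_self, hb0, one_mul] at hc
  -- hc : (∑ i ∈ range n, b (n - i) * e (i+1)) + e (n+1) + b (n+1) = 0
  have hb' : b (n + 1) = (∑ i ∈ range n, b (n - i) * (-e (i + 1))) + (-e (n + 1)) := by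
    simp only [mul_neg]
    rw [Finset.sum_neg_distrib]
    linarith
  have hlow : ∑ i ∈ range n, b n * (-e (i + 1)) ≤ ∑ i ∈ range n, b (n - i) * (-e (i + 1)) := by
    apply Finset.sum_le_sum
    intro i hi
    have hbe : 0 < -e (i + 1) := by
      have := heneg (i + 1) (by omega); linarith
    have : b n ≤ b (n - i) := hanti (n - i) n (by omega)
    nlinarith
  have hen1 : 0 < -e (n + 1) := by
    have := heneg (n + 1) (by omega); linarith
  have h1 : b n ≤ ∑ i ∈ range n, b n * (-e (i + 1)) := by
    rw [← Finset.mul_sum]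
    nlinarith [hbpos n]
  have := hbdec n
  linarith
end

section
/- For 0 < α < 1 and any P ≥ 1, the lower-triangular Toeplitz matrix W_α with (W_α)_{i,j} = b_{i-j} for i ≥ j (b_j = (j+1)^{1-α} - j^{1-α}, b_0 = 1) and 0 otherwise is positive definite, i.e., xᵀ W_α x > 0 for all nonzero x ∈ ℝ^P. -/
open Matrix Finset Set Real

/-- Telescoping/summation-by-parts identity expressing `a k` via the last value,
last difference, and second differences. -/
lemma aux_key8 (a : ℕ → ℝ) (N : ℕ) : ∀ k ≤ N,
    a k = a N + ((N - k : ℕ) : ℝ) * (a (N - 1) - a N)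
      + ∑ l ∈ Finset.range (N - 1),
          ((l + 1 - k : ℕ) : ℝ) * (a l - 2 * a (l + 1) + a (l + 2)) := by
  induction N with
  | zero =>
      intro k hk
      interval_cases k
      simp
  | succ N ih =>
      intro k hk
      rcases Nat.lt_or_ge k (N + 1) with h | h
      · have hkN : k ≤ N := by omega
        rw [ih k hkN]
        rcases N with _ | M
        · interval_cases k
          simp
        · have h1 : M + 1 + 1 - 1 = M + 1 := by omega
          have h2 : M + 1 - 1 = M := by omega
          rw [h1, h2, Finset.sum_range_succ]
          have h3 : (M + 1 + 1 - k) = (M + 1 - k) + 1 := by omega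
          rw [h3, Nat.cast_add, Nat.cast_one]
          ring
      · have hk1 : k = N + 1 := by omega
        subst hk1
        rw [Finset.sum_eq_zero, Nat.sub_self]
        · simp
        · intro l hl
          rw [Finset.mem_range] at hl
          have : l + 1 - (N + 1) = 0 := by omega
          rw [this]
          simp

/-- Fejér-kernel identity: the quadratic form with kernel `(m - |i-j|)₊` is a sum of
squares of sliding-window sums. -/
lemma aux_fejer8 (P m : ℕ) (x : Fin P → ℝ) :
    ∑ i : Fin P, ∑ j : Fin P,
        ((m - (((i : ℕ) - (j : ℕ)) + ((j : ℕ) - (i : ℕ))) : ℕ) : ℝ) * (x i * x j)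
      = ∑ t ∈ Finset.range (P + m),
          (∑ i ∈ Finset.univ.filter (fun i : Fin P => (i : ℕ) ≤ t ∧ t < (i : ℕ) + m), x i) ^ 2 := by
  have hpair : ∀ i j : Fin P,
      ((m - (((i : ℕ) - (j : ℕ)) + ((j : ℕ) - (i : ℕ))) : ℕ) : ℝ) * (x i * x j)
        = ∑ t ∈ Finset.range (P + m),
            (if (i : ℕ) ≤ t ∧ t < (i : ℕ) + m then x i else 0)
              * (if (j : ℕ) ≤ t ∧ t < (j : ℕ) + m then x j else 0) := by
    intro i j
    have hi := i.isLt
    have hj := j.isLt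
    have hcard : ((Finset.range (P + m)).filter
          (fun t => ((i : ℕ) ≤ t ∧ t < (i : ℕ) + m) ∧ ((j : ℕ) ≤ t ∧ t < (j : ℕ) + m))).card
        = m - (((i : ℕ) - (j : ℕ)) + ((j : ℕ) - (i : ℕ))) := by
      have hset : (Finset.range (P + m)).filter
            (fun t => ((i : ℕ) ≤ t ∧ t < (i : ℕ) + m) ∧ ((j : ℕ) ≤ t ∧ t < (j : ℕ) + m))
          = Finset.Ico (max (i : ℕ) (j : ℕ)) (min (i : ℕ) (j : ℕ) + m) := by
        ext t
        simp only [Finset.mem_filter, Finset.mem_range, Finset.mem_Ico]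
        omega
      rw [hset, Nat.card_Ico]
      omega
    calc ((m - (((i : ℕ) - (j : ℕ)) + ((j : ℕ) - (i : ℕ))) : ℕ) : ℝ) * (x i * x j)
        = (((Finset.range (P + m)).filter
            (fun t => ((i : ℕ) ≤ t ∧ t < (i : ℕ) + m) ∧ ((j : ℕ) ≤ t ∧ t < (j : ℕ) + m))).card : ℕ)
              • (x i * x j) := by rw [hcard, nsmul_eq_mul]
      _ = ∑ t ∈ (Finset.range (P + m)).filter
            (fun t => ((i : ℕ) ≤ t ∧ t < (i : ℕ) + m) ∧ ((j : ℕ) ≤ t ∧ t < (j : ℕ) + m)),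
              (x i * x j) := (Finset.sum_const _).symm
      _ = ∑ t ∈ Finset.range (P + m),
            (if ((i : ℕ) ≤ t ∧ t < (i : ℕ) + m) ∧ ((j : ℕ) ≤ t ∧ t < (j : ℕ) + m)
              then x i * x j else 0) := Finset.sum_filter _ _
      _ = ∑ t ∈ Finset.range (P + m),
            (if (i : ℕ) ≤ t ∧ t < (i : ℕ) + m then x i else 0)
              * (if (j : ℕ) ≤ t ∧ t < (j : ℕ) + m then x j else 0) := by
          refine Finset.sum_congr rfl fun t _ => ?_
          by_cases h1 : (i : ℕ) ≤ t ∧ t < (i : ℕ) + m <;>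
            by_cases h2 : (j : ℕ) ≤ t ∧ t < (j : ℕ) + m <;> simp [h1, h2]
  calc ∑ i : Fin P, ∑ j : Fin P,
        ((m - (((i : ℕ) - (j : ℕ)) + ((j : ℕ) - (i : ℕ))) : ℕ) : ℝ) * (x i * x j)
      = ∑ i : Fin P, ∑ j : Fin P, ∑ t ∈ Finset.range (P + m),
          (if (i : ℕ) ≤ t ∧ t < (i : ℕ) + m then x i else 0)
            * (if (j : ℕ) ≤ t ∧ t < (j : ℕ) + m then x j else 0) :=
        Finset.sum_congr rfl fun i _ => Finset.sum_congr rfl fun j _ => hpair i j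
    _ = ∑ i : Fin P, ∑ t ∈ Finset.range (P + m), ∑ j : Fin P,
          (if (i : ℕ) ≤ t ∧ t < (i : ℕ) + m then x i else 0)
            * (if (j : ℕ) ≤ t ∧ t < (j : ℕ) + m then x j else 0) :=
        Finset.sum_congr rfl fun i _ => Finset.sum_comm
    _ = ∑ t ∈ Finset.range (P + m), ∑ i : Fin P, ∑ j : Fin P,
          (if (i : ℕ) ≤ t ∧ t < (i : ℕ) + m then x i else 0)
            * (if (j : ℕ) ≤ t ∧ t < (j : ℕ) + m then x j else 0) := Finset.sum_comm
    _ = ∑ t ∈ Finset.range (P + m),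
          (∑ i ∈ Finset.univ.filter (fun i : Fin P => (i : ℕ) ≤ t ∧ t < (i : ℕ) + m), x i) ^ 2 := by
        refine Finset.sum_congr rfl fun t _ => ?_
        rw [sq, Finset.sum_filter, Finset.sum_mul_sum]

lemma aux_deriv8 (p : ℝ) (hp0 : 0 < p) {y : ℝ} (hy : 0 < y) :
    HasDerivAt (fun y : ℝ => (y + 1) ^ p - y ^ p)
      (p * (y + 1) ^ (p - 1) - p * y ^ (p - 1)) y := by
  have h1 : HasDerivAt (fun z : ℝ => z ^ p) (p * (y + 1) ^ (p - 1)) (y + 1) :=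
    Real.hasDerivAt_rpow_const (Or.inl (by linarith))
  have h2 : HasDerivAt (fun y : ℝ => y + 1) 1 y := (hasDerivAt_id y).add_const 1
  have h3 : HasDerivAt (fun y : ℝ => (y + 1) ^ p) (p * (y + 1) ^ (p - 1) * 1) y := by
    have := h1.comp y h2; exact this
  have h4 : HasDerivAt (fun y : ℝ => y ^ p) (p * y ^ (p - 1)) y :=
    Real.hasDerivAt_rpow_const (Or.inl hy.ne')
  exact (h3.sub h4).congr_deriv (by ring)

lemma aux_deriv8' (p : ℝ) (hp0 : 0 < p) {y : ℝ} (hy : 0 < y) :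
    HasDerivAt (fun y : ℝ => p * (y + 1) ^ (p - 1) - p * y ^ (p - 1))
      (p * ((p - 1) * (y + 1) ^ (p - 1 - 1) * 1) - p * ((p - 1) * y ^ (p - 1 - 1))) y := by
  have h1 : HasDerivAt (fun z : ℝ => z ^ (p - 1)) ((p - 1) * (y + 1) ^ (p - 1 - 1)) (y + 1) :=
    Real.hasDerivAt_rpow_const (Or.inl (by linarith))
  have h2 : HasDerivAt (fun y : ℝ => y + 1) 1 y := (hasDerivAt_id y).add_const 1
  have h3 : HasDerivAt (fun y : ℝ => (y + 1) ^ (p - 1)) ((p - 1) * (y + 1) ^ (p - 1 - 1) * 1) y :=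
    by have := h1.comp y h2; exact this
  have h4 : HasDerivAt (fun y : ℝ => y ^ (p - 1)) ((p - 1) * y ^ (p - 1 - 1)) y :=
    Real.hasDerivAt_rpow_const (Or.inl hy.ne')
  exact (h3.const_mul p).sub (h4.const_mul p)

lemma aux_convex8 (p : ℝ) (hp0 : 0 < p) (hp1 : p < 1) :
    ConvexOn ℝ (Set.Ici 0) (fun y : ℝ => (y + 1) ^ p - y ^ p) := by
  have hrpow_cont : Continuous fun y : ℝ => y ^ p :=
    continuous_iff_continuousAt.mpr fun y => Real.continuousAt_rpow_const y p (Or.inr hp0.le)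
  have hu_cont : Continuous fun y : ℝ => (y + 1) ^ p - y ^ p :=
    (hrpow_cont.comp (continuous_id.add continuous_const)).sub hrpow_cont
  have hderiv_eq : ∀ y ∈ Set.Ioi (0 : ℝ),
      deriv (fun y : ℝ => (y + 1) ^ p - y ^ p) y
        = p * (y + 1) ^ (p - 1) - p * y ^ (p - 1) :=
    fun y hy => (aux_deriv8 p hp0 hy).deriv
  apply convexOn_of_deriv2_nonneg (convex_Ici 0) hu_cont.continuousOn
  · rw [interior_Ici]
    exact fun y hy => ((aux_deriv8 p hp0 hy).differentiableAt).differentiableWithinAt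
  · rw [interior_Ici]
    intro y hy
    have hev : deriv (fun y : ℝ => (y + 1) ^ p - y ^ p)
        =ᶠ[nhds y] fun y : ℝ => p * (y + 1) ^ (p - 1) - p * y ^ (p - 1) :=
      Filter.eventuallyEq_of_mem (isOpen_Ioi.mem_nhds hy) hderiv_eq
    exact ((hev.differentiableAt_iff).mpr (aux_deriv8' p hp0 hy).differentiableAt).differentiableWithinAt
  · rw [interior_Ici]
    intro y hy
    have hev : deriv (fun y : ℝ => (y + 1) ^ p - y ^ p)
        =ᶠ[nhds y] fun y : ℝ => p * (y + 1) ^ (p - 1) - p * y ^ (p - 1) :=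
      Filter.eventuallyEq_of_mem (isOpen_Ioi.mem_nhds hy) hderiv_eq
    have h2 : deriv^[2] (fun y : ℝ => (y + 1) ^ p - y ^ p) y
        = deriv (deriv (fun y : ℝ => (y + 1) ^ p - y ^ p)) y := rfl
    rw [h2, hev.deriv_eq, (aux_deriv8' p hp0 hy).deriv]
    have hle : (y + 1) ^ (p - 1 - 1) ≤ y ^ (p - 1 - 1) :=
      Real.rpow_le_rpow_of_nonpos hy (by linarith) (by linarith)
    nlinarith [mul_nonneg (mul_nonneg hp0.le (by linarith : (0:ℝ) ≤ 1 - p))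
      (sub_nonneg.mpr hle)]

/-- For `0 < α < 1` and `P ≥ 1`, the lower-triangular Toeplitz matrix `W_α`
generated by `b j = (j+1)^(1-α) - j^(1-α)` is positive definite in the
quadratic-form sense: `xᵀ W_α x > 0` for all nonzero `x ∈ ℝ^P`. -/
theorem stmt_8 (α : ℝ) (hα0 : 0 < α) (hα1 : α < 1) (P : ℕ) (hP : 1 ≤ P)
    (W : Matrix (Fin P) (Fin P) ℝ)
    (hW : ∀ i j : Fin P, W i j =
      if (j : ℕ) ≤ (i : ℕ) then
        (((i : ℕ) - (j : ℕ) : ℕ) + 1 : ℝ) ^ (1 - α) - (((i : ℕ) - (j : ℕ) : ℕ) : ℝ) ^ (1 - α)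
      else 0)
    (x : Fin P → ℝ) (hx : x ≠ 0) :
    0 < x ⬝ᵥ W.mulVec x := by
  have hp0 : 0 < 1 - α := by linarith
  have hp1 : 1 - α < 1 := by linarith
  set p : ℝ := 1 - α with hp
  set a : ℕ → ℝ := fun k => ((k : ℝ) + 1) ^ p - (k : ℝ) ^ p with ha
  -- basic facts about a
  have ha0 : a 0 = 1 := by
    simp only [ha, Nat.cast_zero, zero_add, Real.one_rpow, Real.zero_rpow hp0.ne']
    ring
  have ha_nonneg : ∀ k : ℕ, 0 ≤ a k := by
    intro k
    simp only [ha]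
    have : (k : ℝ) ^ p ≤ ((k : ℝ) + 1) ^ p :=
      Real.rpow_le_rpow (Nat.cast_nonneg k) (by linarith) hp0.le
    linarith
  have hamono : ∀ k : ℕ, a (k + 1) ≤ a k := by
    intro k
    have hcon := Real.concaveOn_rpow hp0.le hp1.le
    have h := hcon.2 (Set.mem_Ici.mpr (Nat.cast_nonneg k : (0:ℝ) ≤ (k:ℝ)))
      (Set.mem_Ici.mpr (by positivity : (0:ℝ) ≤ (k:ℝ) + 2))
      (by norm_num : (0:ℝ) ≤ 1/2) (by norm_num : (0:ℝ) ≤ 1/2) (by norm_num)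
    simp only [smul_eq_mul] at h
    have harg : (1/2 : ℝ) * (k:ℝ) + (1/2 : ℝ) * ((k:ℝ) + 2) = (k:ℝ) + 1 := by ring
    rw [harg] at h
    simp only [ha]
    push_cast
    have e : (k:ℝ) + 1 + 1 = (k:ℝ) + 2 := by ring
    rw [e]
    linarith
  have haconv : ∀ k : ℕ, 0 ≤ a k - 2 * a (k + 1) + a (k + 2) := by
    intro k
    have hcon := aux_convex8 p hp0 hp1
    have h := hcon.2 (Set.mem_Ici.mpr (Nat.cast_nonneg k : (0:ℝ) ≤ (k:ℝ)))
      (Set.mem_Ici.mpr (by positivity : (0:ℝ) ≤ (k:ℝ) + 2))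
      (by norm_num : (0:ℝ) ≤ 1/2) (by norm_num : (0:ℝ) ≤ 1/2) (by norm_num)
    simp only [smul_eq_mul] at h
    have harg : (1/2 : ℝ) * (k:ℝ) + (1/2 : ℝ) * ((k:ℝ) + 2) = (k:ℝ) + 1 := by ring
    rw [harg] at h
    simp only [ha]
    push_cast
    have e : (k:ℝ) + 1 + 1 = (k:ℝ) + 2 := by ring
    rw [e] at h ⊢
    linarith
  set N : ℕ := P - 1 with hN
  have hD : 0 ≤ a (N - 1) - a N := by
    rcases Nat.eq_zero_or_pos N with h | h
    · simp [h]
    · have := hamono (N - 1)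
      rw [Nat.sub_add_cancel h] at this
      linarith
  have hdle : ∀ i j : Fin P, ((i:ℕ) - (j:ℕ)) + ((j:ℕ) - (i:ℕ)) ≤ N := by
    intro i j
    have hi := i.isLt
    have hj := j.isLt
    omega
  -- Step A: symmetrization
  have hQform : x ⬝ᵥ W.mulVec x
      = ∑ i : Fin P, ∑ j : Fin P,
          (if (j:ℕ) ≤ (i:ℕ) then a ((i:ℕ) - (j:ℕ)) else 0) * (x i * x j) := by
    simp only [dotProduct, Matrix.mulVec, hW, Finset.mul_sum]
    refine Finset.sum_congr rfl fun i _ => Finset.sum_congr rfl fun j _ => ?_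
    simp only [ha]
    split_ifs with h <;> ring
  have hswap : (∑ i : Fin P, ∑ j : Fin P,
        (if (j:ℕ) ≤ (i:ℕ) then a ((i:ℕ) - (j:ℕ)) else 0) * (x i * x j))
      = ∑ i : Fin P, ∑ j : Fin P,
          (if (i:ℕ) ≤ (j:ℕ) then a ((j:ℕ) - (i:ℕ)) else 0) * (x i * x j) := by
    rw [Finset.sum_comm]
    exact Finset.sum_congr rfl fun i _ => Finset.sum_congr rfl fun j _ => by ring
  have hpt : ∀ i j : Fin P,
      (if (j:ℕ) ≤ (i:ℕ) then a ((i:ℕ) - (j:ℕ)) else 0) * (x i * x j)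
        + (if (i:ℕ) ≤ (j:ℕ) then a ((j:ℕ) - (i:ℕ)) else 0) * (x i * x j)
      = a (((i:ℕ) - (j:ℕ)) + ((j:ℕ) - (i:ℕ))) * (x i * x j)
        + (if i = j then x i ^ 2 else 0) := by
    intro i j
    rcases lt_trichotomy ((i:ℕ)) ((j:ℕ)) with h | h | h
    · have h1 : ¬ ((j:ℕ) ≤ (i:ℕ)) := by omega
      have h2 : (i:ℕ) ≤ (j:ℕ) := le_of_lt h
      have h3 : ¬ (i = j) := fun e => by rw [e] at h; exact lt_irrefl _ h
      have h4 : (i:ℕ) - (j:ℕ) = 0 := by omega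
      simp only [h1, h2, h3, h4, if_true, if_false, ite_true, ite_false, zero_add]
      ring
    · have h3 : i = j := Fin.ext h
      subst h3
      simp only [le_refl, Nat.sub_self, ite_true, if_true, ha0, zero_add]
      ring
    · have h1 : (j:ℕ) ≤ (i:ℕ) := le_of_lt h
      have h2 : ¬ ((i:ℕ) ≤ (j:ℕ)) := by omega
      have h3 : ¬ (i = j) := fun e => by rw [e] at h; exact lt_irrefl _ h
      have h4 : (j:ℕ) - (i:ℕ) = 0 := by omega
      simp only [h1, h2, h3, h4, if_true, if_false, ite_true, ite_false, add_zero]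
      ring
  have hstepA : 2 * (x ⬝ᵥ W.mulVec x)
      = (∑ i : Fin P, ∑ j : Fin P,
          a (((i:ℕ) - (j:ℕ)) + ((j:ℕ) - (i:ℕ))) * (x i * x j))
        + ∑ i : Fin P, x i ^ 2 := by
    rw [hQform, two_mul]
    nth_rewrite 2 [hswap]
    rw [← Finset.sum_add_distrib]
    calc ∑ i : Fin P, (∑ j : Fin P,
            (if (j:ℕ) ≤ (i:ℕ) then a ((i:ℕ) - (j:ℕ)) else 0) * (x i * x j)
          + ∑ j : Fin P, (if (i:ℕ) ≤ (j:ℕ) then a ((j:ℕ) - (i:ℕ)) else 0) * (x i * x j))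
        = ∑ i : Fin P, ∑ j : Fin P,
            (a (((i:ℕ) - (j:ℕ)) + ((j:ℕ) - (i:ℕ))) * (x i * x j)
              + (if i = j then x i ^ 2 else 0)) := by
          refine Finset.sum_congr rfl fun i _ => ?_
          rw [← Finset.sum_add_distrib]
          exact Finset.sum_congr rfl fun j _ => hpt i j
      _ = (∑ i : Fin P, ∑ j : Fin P,
            a (((i:ℕ) - (j:ℕ)) + ((j:ℕ) - (i:ℕ))) * (x i * x j))
          + ∑ i : Fin P, x i ^ 2 := by
          rw [← Finset.sum_add_distrib]
          refine Finset.sum_congr rfl fun i _ => ?_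
          rw [Finset.sum_add_distrib]
          congr 1
          simp
  -- Step B: the symmetrized form is nonnegative
  have hfejer_nonneg : ∀ m : ℕ,
      0 ≤ ∑ i : Fin P, ∑ j : Fin P,
        ((m - (((i : ℕ) - (j : ℕ)) + ((j : ℕ) - (i : ℕ))) : ℕ) : ℝ) * (x i * x j) := by
    intro m
    rw [aux_fejer8 P m x]
    exact Finset.sum_nonneg fun t _ => sq_nonneg _
  have hQsym : 0 ≤ ∑ i : Fin P, ∑ j : Fin P,
      a (((i:ℕ) - (j:ℕ)) + ((j:ℕ) - (i:ℕ))) * (x i * x j) := by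
    have hrw : ∀ i j : Fin P,
        a (((i:ℕ) - (j:ℕ)) + ((j:ℕ) - (i:ℕ))) * (x i * x j)
        = a N * (x i * x j)
          + (((N - ((((i:ℕ) - (j:ℕ)) + ((j:ℕ) - (i:ℕ)))) : ℕ) : ℝ) * (x i * x j))
              * (a (N - 1) - a N)
          + ∑ l ∈ Finset.range (N - 1),
              (((l + 1 - ((((i:ℕ) - (j:ℕ)) + ((j:ℕ) - (i:ℕ)))) : ℕ) : ℝ) * (x i * x j))
                * (a l - 2 * a (l + 1) + a (l + 2)) := by
      intro i j
      rw [aux_key8 a N _ (hdle i j), add_mul, add_mul, Finset.sum_mul]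
      congr 1
      · congr 1
        ring
      · exact Finset.sum_congr rfl fun l _ => by ring
    rw [Finset.sum_congr rfl fun i _ => Finset.sum_congr rfl fun j _ => hrw i j]
    simp only [Finset.sum_add_distrib]
    have hT1 : 0 ≤ ∑ i : Fin P, ∑ j : Fin P, a N * (x i * x j) := by
      have : ∑ i : Fin P, ∑ j : Fin P, a N * (x i * x j)
          = a N * ((∑ i : Fin P, x i) * (∑ i : Fin P, x i)) := by
        rw [Finset.sum_mul_sum]
        simp only [Finset.mul_sum]
      rw [this]
      exact mul_nonneg (ha_nonneg N) (mul_self_nonneg _)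
    have hT2 : 0 ≤ ∑ i : Fin P, ∑ j : Fin P,
        (((N - ((((i:ℕ) - (j:ℕ)) + ((j:ℕ) - (i:ℕ)))) : ℕ) : ℝ) * (x i * x j))
          * (a (N - 1) - a N) := by
      have : ∑ i : Fin P, ∑ j : Fin P,
          (((N - ((((i:ℕ) - (j:ℕ)) + ((j:ℕ) - (i:ℕ)))) : ℕ) : ℝ) * (x i * x j))
            * (a (N - 1) - a N)
          = (∑ i : Fin P, ∑ j : Fin P,
              ((N - ((((i:ℕ) - (j:ℕ)) + ((j:ℕ) - (i:ℕ)))) : ℕ) : ℝ) * (x i * x j))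
            * (a (N - 1) - a N) := by
        simp only [Finset.sum_mul]
      rw [this]
      exact mul_nonneg (hfejer_nonneg N) hD
    have hT3 : 0 ≤ ∑ i : Fin P, ∑ j : Fin P, ∑ l ∈ Finset.range (N - 1),
        (((l + 1 - ((((i:ℕ) - (j:ℕ)) + ((j:ℕ) - (i:ℕ)))) : ℕ) : ℝ) * (x i * x j))
          * (a l - 2 * a (l + 1) + a (l + 2)) := by
      have hsw : ∑ i : Fin P, ∑ j : Fin P, ∑ l ∈ Finset.range (N - 1),
          (((l + 1 - ((((i:ℕ) - (j:ℕ)) + ((j:ℕ) - (i:ℕ)))) : ℕ) : ℝ) * (x i * x j))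
            * (a l - 2 * a (l + 1) + a (l + 2))
          = ∑ l ∈ Finset.range (N - 1), ∑ i : Fin P, ∑ j : Fin P,
              (((l + 1 - ((((i:ℕ) - (j:ℕ)) + ((j:ℕ) - (i:ℕ)))) : ℕ) : ℝ) * (x i * x j))
                * (a l - 2 * a (l + 1) + a (l + 2)) := by
        exact (Finset.sum_congr rfl fun i _ => Finset.sum_comm).trans Finset.sum_comm
      rw [hsw]
      refine Finset.sum_nonneg fun l _ => ?_
      have : ∑ i : Fin P, ∑ j : Fin P,
          (((l + 1 - ((((i:ℕ) - (j:ℕ)) + ((j:ℕ) - (i:ℕ)))) : ℕ) : ℝ) * (x i * x j))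
            * (a l - 2 * a (l + 1) + a (l + 2))
          = (∑ i : Fin P, ∑ j : Fin P,
              (((l + 1 - ((((i:ℕ) - (j:ℕ)) + ((j:ℕ) - (i:ℕ)))) : ℕ) : ℝ) * (x i * x j)))
            * (a l - 2 * a (l + 1) + a (l + 2)) := by
        simp only [Finset.sum_mul]
      rw [this]
      exact mul_nonneg (hfejer_nonneg (l + 1)) (haconv l)
    linarith
  -- conclude
  have hxsq : 0 < ∑ i : Fin P, x i ^ 2 := by
    obtain ⟨i, hi⟩ := Function.ne_iff.mp hx
    refine Finset.sum_pos' (fun j _ => sq_nonneg _) ⟨i, Finset.mem_univ i, ?_⟩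
    have : x i ≠ 0 := hi
    positivity
  linarith
end

section
/- Uniqueness for the left-sided finite difference scheme: let P ≥ 2, α ∈ (0,1), κ : ℝ → ℝ with κ > 0, and let U : {0,…,P} → ℝ satisfy U_0 = U_P = 0 and, for 1 ≤ n ≤ P-1, κ^{n-1/2} ∑_{j=1}^n w_{n,j} δU_j − κ^{n+1/2} ∑_{j=1}^{n+1} w_{n+1,j} δU_j = 0, where w_{n,j} = (n+1-j)^{1-α} − (n-j)^{1-α}, δU_j = U_j − U_{j-1}, and κ^{m+1/2} = κ(x_{m+1/2}) > 0. Then U ≡ 0. -/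
open Finset

lemma rpow_step_dec {p : ℝ} (hp0 : 0 < p) (hp1 : p < 1) (x : ℝ) (hx : 0 ≤ x) :
    (x + 2) ^ p - (x + 1) ^ p ≤ (x + 1) ^ p - x ^ p := by
  have h := (Real.concaveOn_rpow hp0.le hp1.le).2 (Set.mem_Ici.2 hx)
    (Set.mem_Ici.2 (by linarith : (0:ℝ) ≤ x + 2)) (by norm_num : (0:ℝ) ≤ 1/2)
    (by norm_num : (0:ℝ) ≤ 1/2) (by norm_num)
  have hmid : (1/2 : ℝ) • x + (1/2 : ℝ) • (x + 2) = x + 1 := by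
    simp [smul_eq_mul]; ring
  rw [hmid] at h
  simp only [smul_eq_mul] at h
  linarith

lemma abel_sum (g U : ℕ → ℝ) (hU0 : U 0 = 0) :
    ∀ m : ℕ, ∑ j ∈ Finset.Icc 1 (m+1), g j * (U j - U (j-1))
      = g (m+1) * U (m+1) + ∑ j ∈ Finset.Icc 1 m, (g j - g (j+1)) * U j := by
  intro m
  induction m with
  | zero => simp [hU0]
  | succ m ih =>
    rw [Finset.sum_Icc_succ_top (by omega : 1 ≤ m+1+1), ih,
        Finset.sum_Icc_succ_top (by omega : 1 ≤ m+1)]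
    simp only [Nat.add_sub_cancel]
    ring

lemma pos_helper (P : ℕ) (e : ℕ → ℕ → ℝ) (B V : ℕ → ℝ)
    (he : ∀ n j, 1 ≤ j → j ≤ n - 1 → 0 ≤ e n j)
    (hB : ∀ n, 1 ≤ n → n ≤ P → 0 < B n)
    (hV : ∀ n, 1 ≤ n → n ≤ P → V n = B n + ∑ j ∈ Finset.Icc 1 (n-1), e n j * V j) :
    ∀ n, 1 ≤ n → n ≤ P → 0 < V n := by
  intro n
  induction n using Nat.strong_induction_on with
  | _ n ih =>
    intro h1 hn
    rw [hV n h1 hn]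
    have hsum : 0 ≤ ∑ j ∈ Finset.Icc 1 (n-1), e n j * V j := by
      apply Finset.sum_nonneg
      intro j hj
      simp only [Finset.mem_Icc] at hj
      exact mul_nonneg (he n j hj.1 hj.2) (le_of_lt (ih j (by omega) hj.1 (by omega)))
    linarith [hB n h1 hn]

/-- Uniqueness for the left-sided finite difference scheme: if `U` satisfies the
homogeneous scheme with positive midpoint diffusivity values `κ (m)` (denoting
`κ^{m+1/2}`) and `U 0 = U P = 0`, then `U ≡ 0` on `{0,…,P}`. -/
theorem stmt_13 (α : ℝ) (hα0 : 0 < α) (hα1 : α < 1)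
    (P : ℕ) (hP : 2 ≤ P)
    (κ : ℕ → ℝ) (hκ : ∀ m, 0 < κ m)
    (w : ℕ → ℕ → ℝ)
    (hw : ∀ n j : ℕ, 1 ≤ j → j ≤ n →
      w n j = ((n + 1 - j : ℕ) : ℝ) ^ (1 - α) - ((n - j : ℕ) : ℝ) ^ (1 - α))
    (U : ℕ → ℝ) (hU0 : U 0 = 0) (hUP : U P = 0)
    (hscheme : ∀ n : ℕ, 1 ≤ n → n ≤ P - 1 →
      κ (n - 1) * ∑ j ∈ Finset.Icc 1 n, w n j * (U j - U (j - 1))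
        - κ n * ∑ j ∈ Finset.Icc 1 (n + 1), w (n + 1) j * (U j - U (j - 1)) = 0) :
    ∀ n : ℕ, n ≤ P → U n = 0 := by
  have hp0 : (0:ℝ) < 1 - α := by linarith
  have hp1 : (1:ℝ) - α < 1 := by linarith
  set A : ℕ → ℝ := fun n => ∑ j ∈ Finset.Icc 1 n, w n j * (U j - U (j-1)) with hA
  -- w n n = 1
  have hwnn : ∀ n : ℕ, 1 ≤ n → w n n = 1 := by
    intro n hn
    rw [hw n n hn le_rfl]
    have h1 : n + 1 - n = 1 := by omega
    have h2 : n - n = 0 := by omega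
    rw [h1, h2]
    simp [Real.zero_rpow (ne_of_gt hp0)]
  -- e is nonneg
  set e : ℕ → ℕ → ℝ := fun n j => w n (j+1) - w n j with he
  have hennd : ∀ n j, 1 ≤ j → j ≤ n - 1 → 0 ≤ e n j := by
    intro n j hj1 hj2
    have hn2 : 2 ≤ n := by omega
    have hjn : j + 1 ≤ n := by omega
    simp only [he]
    rw [hw n (j+1) (by omega) hjn, hw n j hj1 (by omega)]
    set k := n - 1 - j with hk
    have e1 : n + 1 - (j+1) = k + 1 := by omega
    have e2 : n - (j+1) = k := by omega
    have e3 : n + 1 - j = k + 2 := by omega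
    have e4 : n - j = k + 1 := by omega
    rw [e1, e2, e3, e4]
    push_cast
    have := rpow_step_dec hp0 hp1 (k:ℝ) (by positivity)
    linarith
  -- identity: U n = A n + ∑ e n j * U j
  have hUid : ∀ n : ℕ, 1 ≤ n →
      U n = A n + ∑ j ∈ Finset.Icc 1 (n-1), e n j * U j := by
    intro n hn
    obtain ⟨m, rfl⟩ : ∃ m, n = m + 1 := ⟨n - 1, by omega⟩
    have habel := abel_sum (w (m+1)) U hU0 m
    simp only [hA]
    rw [habel, hwnn (m+1) (by omega), one_mul]
    have : ∑ j ∈ Finset.Icc 1 m, (w (m+1) j - w (m+1) (j+1)) * U j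
        = - ∑ j ∈ Finset.Icc 1 (m+1-1), e (m+1) j * U j := by
      rw [← Finset.sum_neg_distrib]
      apply Finset.sum_congr (by norm_num)
      intro j _
      simp only [he]
      ring
    rw [this]
    ring
  -- constancy
  have hconst : ∀ n : ℕ, 1 ≤ n → n ≤ P → κ (n-1) * A n = κ 0 * A 1 := by
    intro n
    induction n with
    | zero => omega
    | succ n ih =>
      intro _ hn
      rcases Nat.eq_zero_or_pos n with h0 | h1
      · subst h0; simp
      · have hs := hscheme n h1 (by omega)
        have hi := ih h1 (by omega)
        simp only [Nat.add_sub_cancel]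
        simp only [hA] at hi hs ⊢
        linarith
  set c : ℝ := κ 0 * A 1 with hc
  have hAval : ∀ n : ℕ, 1 ≤ n → n ≤ P → A n = c / κ (n-1) := by
    intro n h1 h2
    rw [eq_div_iff (ne_of_gt (hκ (n-1))), mul_comm]
    exact hconst n h1 h2
  -- c = 0
  have hc0 : c = 0 := by
    by_contra hne
    rcases lt_or_gt_of_ne hne with hlt | hgt
    · have := pos_helper P e (fun n => -c / κ (n-1)) (fun n => -U n)
        hennd
        (fun n h1 h2 => div_pos (by linarith) (hκ (n-1)))
        (fun n h1 h2 => by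
          have := hUid n h1
          rw [hAval n h1 h2] at this
          have hsum : ∑ j ∈ Finset.Icc 1 (n-1), e n j * (-U j)
              = - ∑ j ∈ Finset.Icc 1 (n-1), e n j * U j := by
            rw [← Finset.sum_neg_distrib]; apply Finset.sum_congr rfl; intros; ring
          simp only [neg_div] at *
          rw [hsum]
          linarith) P (by omega) le_rfl
      simp only [hUP, neg_zero] at this
      exact lt_irrefl 0 this
    · have := pos_helper P e (fun n => c / κ (n-1)) U
        hennd
        (fun n h1 h2 => div_pos hgt (hκ (n-1)))
        (fun n h1 h2 => by
          show U n = c / κ (n - 1) + ∑ j ∈ Finset.Icc 1 (n-1), e n j * U j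
          rw [← hAval n h1 h2]; exact hUid n h1) P (by omega) le_rfl
      rw [hUP] at this; exact lt_irrefl 0 this
  -- now A n = 0 on 1..P, conclude by strong induction
  intro n
  induction n using Nat.strong_induction_on with
  | _ n ih =>
    intro hn
    rcases Nat.eq_zero_or_pos n with h0 | h1
    · subst h0; exact hU0
    · rw [hUid n h1, hAval n h1 hn, hc0, zero_div, zero_add]
      apply Finset.sum_eq_zero
      intro j hj
      simp only [Finset.mem_Icc] at hj
      rw [ih j (by omega) (by omega), mul_zero]
end
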